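/- Let m ≥ 3 and let λ_1,…,λ_m ∈ ℤ² be such that each λ_i is primitive and det(λ_i,λ_{i+1}) ≠ 0 for i = 1,…,m (indices mod m). Let L = L_1 ∩ ⋯ ∩ L_m. Then L has finite index in ℤ^m, and for every ℤ-basis κ_1,…,κ_{m−2} of K, the index equals [ℤ^m : L] = |det M| where M is the m×m integer matrix whose columns are a, b, φ(κ_1),…,φ(κ_{m−2}); in particular this determinant is nonzero. -/

import Mathlib

namespace ToricStmt

/-- Cyclic successor on `Fin m` (indices mod `m`). -/
def fsucc {m : ℕ} (i : Fin m) : Fin m := ⟨(i.val + 1) % m, Nat.mod_lt _ i.pos⟩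

/-- The submodule `K` of linear relations among the `λ_i = (a_i, b_i)`. -/
def Kmod (m : ℕ) (a b : Fin m → ℤ) : Submodule ℤ (Fin m → ℤ) where
  carrier := {t | ∑ i, t i * a i = 0 ∧ ∑ i, t i * b i = 0}
  add_mem' := by
    intro x y hx hy
    obtain ⟨hx1, hx2⟩ := hx
    obtain ⟨hy1, hy2⟩ := hy
    constructor
    · simp only [Pi.add_apply, add_mul]
      rw [Finset.sum_add_distrib, hx1, hy1, add_zero]
    · simp only [Pi.add_apply, add_mul]
      rw [Finset.sum_add_distrib, hx2, hy2, add_zero]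
  zero_mem' := by constructor <;> simp
  smul_mem' := by
    intro c x hx
    obtain ⟨hx1, hx2⟩ := hx
    constructor
    · simp only [Pi.smul_apply, smul_eq_mul, mul_assoc]
      rw [← Finset.mul_sum, hx1, mul_zero]
    · simp only [Pi.smul_apply, smul_eq_mul, mul_assoc]
      rw [← Finset.mul_sum, hx2, mul_zero]

/-- The linear map `φ : ℤ^m → ℤ^m`, with `(φ t)_i = ∑_{j<i} (a_j b_i - a_i b_j) t_j`. -/
def phi (m : ℕ) (a b : Fin m → ℤ) : (Fin m → ℤ) →ₗ[ℤ] (Fin m → ℤ) where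
  toFun t := fun i => ∑ j ∈ Finset.univ.filter (fun j => j < i), (a j * b i - a i * b j) * t j
  map_add' x y := by
    funext i
    simp only [Pi.add_apply, mul_add]
    exact Finset.sum_add_distrib
  map_smul' c x := by
    funext i
    simp only [Pi.smul_apply, smul_eq_mul, RingHom.id_apply]
    rw [Finset.mul_sum]
    exact Finset.sum_congr rfl fun j _ => by ring

/-- The lattice `L_i`: the span of the `e_j` for `j ∉ {i, i+1}` together with
`a_i e_i + a_{i+1} e_{i+1}` and `b_i e_i + b_{i+1} e_{i+1}` (indices mod `m`). -/
def Lmod (m : ℕ) (a b : Fin m → ℤ) (i : Fin m) : Submodule ℤ (Fin m → ℤ) :=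
  Submodule.span ℤ
    ((fun j : Fin m => (Pi.single j 1 : Fin m → ℤ)) '' {j : Fin m | j ≠ i ∧ j ≠ fsucc i} ∪
      {a i • (Pi.single i 1 : Fin m → ℤ) + a (fsucc i) • (Pi.single (fsucc i) 1 : Fin m → ℤ),
       b i • (Pi.single i 1 : Fin m → ℤ) + b (fsucc i) • (Pi.single (fsucc i) 1 : Fin m → ℤ)})


/-! Auxiliary lemmas -/

lemma index_eq_natAbs_det {m : ℕ} (N : Submodule ℤ (Fin m → ℤ)) (c : Module.Basis (Fin m) ℤ N) :
    N.toAddSubgroup.index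
      = ((Pi.basisFun ℤ (Fin m)).det (fun j => (c j : Fin m → ℤ))).natAbs := by
  classical
  obtain ⟨n, snf⟩ := N.smithNormalForm (Pi.basisFun ℤ (Fin m))
  have hn : n = m := by
    have e := snf.bN.indexEquiv c
    simpa using Fintype.card_congr e
  subst hn
  rw [snf.toAddSubgroup_index_eq_ite, if_pos (by simp)]
  simp_rw [Ideal.span_singleton_toAddSubgroup_eq_zmultiples, Int.index_zmultiples]
  have h1 : (fun j => (c j : Fin n → ℤ)) = ⇑N.subtype ∘ ⇑c := rfl
  rw [h1, Module.Basis.det_comp_basis]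
  rw [Int.natAbs_eq_iff_associated.mpr
    (LinearMap.associated_det_comp_equiv N.subtype ((Pi.basisFun ℤ (Fin n)).equiv c (Equiv.refl _))
      (snf.bM.equiv snf.bN (Equiv.refl _)))]
  set g := N.subtype ∘ₗ (snf.bM.equiv snf.bN (Equiv.refl _) : (Fin n → ℤ) →ₗ[ℤ] ↥N) with hgdef
  have hσ : Function.Bijective snf.f :=
    (Fintype.bijective_iff_injective_and_card snf.f).mpr ⟨snf.f.injective, rfl⟩
  set σ := Equiv.ofBijective snf.f hσ with hσdef
  have hg : ∀ i, g (snf.bM i) = snf.a i • snf.bM (snf.f i) := by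
    intro i
    rw [hgdef]; simp only [LinearMap.comp_apply, LinearEquiv.coe_coe, Module.Basis.equiv_apply, Equiv.refl_apply]; exact snf.snf i
  have hmat : LinearMap.toMatrix snf.bM snf.bM g
      = fun i => (Matrix.diagonal snf.a) (σ.symm i) := by
    ext i j
    rw [LinearMap.toMatrix_apply, hg, map_smul, Module.Basis.repr_self]
    simp only [Finsupp.smul_single, smul_eq_mul, mul_one, Finsupp.single_apply]
    by_cases h : snf.f j = i
    · have h2 : σ.symm i = j := by
        rw [Equiv.symm_apply_eq]; exact h.symm
      simp [h, h2, Matrix.diagonal_apply_eq]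
    · have h2 : σ.symm i ≠ j := by
        rw [Ne, Equiv.symm_apply_eq]; exact fun hh => h hh.symm
      simp [h, Matrix.diagonal_apply_ne _ h2]
  rw [← LinearMap.det_toMatrix snf.bM, hmat]
  rw [show (fun i => Matrix.diagonal snf.a (σ.symm i))
      = (Matrix.diagonal snf.a).submatrix σ.symm id from rfl]
  rw [Matrix.det_permute σ.symm (Matrix.diagonal snf.a)]
  rw [Matrix.det_diagonal]
  simp only [Int.natAbs_mul, Int.cast_id, Int.units_natAbs, one_mul]
  exact (map_prod Int.natAbsHom _ _).symm

lemma fsucc_ne {m : ℕ} (hm : 3 ≤ m) (i : Fin m) : i ≠ fsucc i := by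
  intro h
  have hv := congrArg Fin.val h
  simp only [fsucc] at hv
  rcases Nat.lt_or_ge (i.val + 1) m with h1 | h1
  · rw [Nat.mod_eq_of_lt h1] at hv; omega
  · have h2 : i.val + 1 = m := by have := i.isLt; omega
    rw [h2, Nat.mod_self] at hv
    omega

lemma fsucc_of_lt {m : ℕ} {i : Fin m} (h : i.val + 1 < m) : fsucc i = ⟨i.val + 1, h⟩ :=
  Fin.ext (Nat.mod_eq_of_lt h)

lemma fsucc_of_eq {m : ℕ} {i : Fin m} (h : i.val + 1 = m) (h0 : 0 < m) : fsucc i = ⟨0, h0⟩ := by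
  apply Fin.ext
  show (i.val + 1) % m = 0
  rw [h, Nat.mod_self]

lemma mem_Lmod_iff {m : ℕ} (hm : 3 ≤ m) (a b : Fin m → ℤ) (i : Fin m) (x : Fin m → ℤ) :
    x ∈ Lmod m a b i ↔ ∃ u w : ℤ, x i = u * a i + w * b i ∧
      x (fsucc i) = u * a (fsucc i) + w * b (fsucc i) := by
  have hne := fsucc_ne hm i
  constructor
  · intro hx
    induction hx using Submodule.span_induction with
    | mem y hy =>
      rcases hy with ⟨j, ⟨hj1, hj2⟩, rfl⟩ | hy
      · refine ⟨0, 0, ?_, ?_⟩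
        · simpa using Pi.single_eq_of_ne (M := fun _ : Fin m => ℤ) (Ne.symm hj1) 1
        · simpa using Pi.single_eq_of_ne (M := fun _ : Fin m => ℤ)
            (fun h => hj2 h.symm : fsucc i ≠ j) 1
      · rcases hy with rfl | rfl
        · refine ⟨1, 0, ?_, ?_⟩
          · simp only [Pi.add_apply, Pi.smul_apply, smul_eq_mul,
              Pi.single_eq_same, Pi.single_eq_of_ne hne]
            ring
          · simp only [Pi.add_apply, Pi.smul_apply, smul_eq_mul,
              Pi.single_eq_same, Pi.single_eq_of_ne (Ne.symm hne)]
            ring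
        · refine ⟨0, 1, ?_, ?_⟩
          · simp only [Pi.add_apply, Pi.smul_apply, smul_eq_mul,
              Pi.single_eq_same, Pi.single_eq_of_ne hne]
            ring
          · simp only [Pi.add_apply, Pi.smul_apply, smul_eq_mul,
              Pi.single_eq_same, Pi.single_eq_of_ne (Ne.symm hne)]
            ring
    | zero => exact ⟨0, 0, by simp, by simp⟩
    | add y z hy hz ihy ihz =>
      obtain ⟨u1, w1, h1, h2⟩ := ihy
      obtain ⟨u2, w2, h3, h4⟩ := ihz
      exact ⟨u1 + u2, w1 + w2,
        by simp only [Pi.add_apply]; rw [h1, h3]; ring,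
        by simp only [Pi.add_apply]; rw [h2, h4]; ring⟩
    | smul c y hy ihy =>
      obtain ⟨u1, w1, h1, h2⟩ := ihy
      exact ⟨c * u1, c * w1,
        by simp only [Pi.smul_apply, smul_eq_mul]; rw [h1]; ring,
        by simp only [Pi.smul_apply, smul_eq_mul]; rw [h2]; ring⟩
  · rintro ⟨u, w, h1, h2⟩
    have hA : (a i • (Pi.single i 1 : Fin m → ℤ) + a (fsucc i) • Pi.single (fsucc i) 1)
        ∈ Lmod m a b i :=
      Submodule.subset_span (Or.inr (Set.mem_insert _ _))
    have hB : (b i • (Pi.single i 1 : Fin m → ℤ) + b (fsucc i) • Pi.single (fsucc i) 1)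
        ∈ Lmod m a b i :=
      Submodule.subset_span (Or.inr (Set.mem_insert_of_mem _ rfl))
    set g : Fin m → ℤ :=
      u • (a i • (Pi.single i 1 : Fin m → ℤ) + a (fsucc i) • Pi.single (fsucc i) 1)
      + w • (b i • (Pi.single i 1 : Fin m → ℤ) + b (fsucc i) • Pi.single (fsucc i) 1)
      with hgdef
    have hg : g ∈ Lmod m a b i :=
      Submodule.add_mem _ (Submodule.smul_mem _ _ hA) (Submodule.smul_mem _ _ hB)
    have hgi : g i = u * a i + w * b i := by
      rw [hgdef]
      simp only [Pi.add_apply, Pi.smul_apply, smul_eq_mul,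
        Pi.single_eq_same, Pi.single_eq_of_ne hne]
      ring
    have hgs : g (fsucc i) = u * a (fsucc i) + w * b (fsucc i) := by
      rw [hgdef]
      simp only [Pi.add_apply, Pi.smul_apply, smul_eq_mul,
        Pi.single_eq_same, Pi.single_eq_of_ne (Ne.symm hne)]
      ring
    have hrest : x - g ∈ Lmod m a b i := by
      have hre : x - g = ∑ j, Pi.single j ((x - g) j) := (Finset.univ_sum_single (x - g)).symm
      rw [hre]
      refine Submodule.sum_mem _ fun j _ => ?_
      by_cases hji : j = i
      · subst hji
        have hz : (x - g) j = 0 := by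
          simp only [Pi.sub_apply, hgi, h1]; ring
        rw [hz, Pi.single_zero]
        exact Submodule.zero_mem _
      · by_cases hjs : j = fsucc i
        · subst hjs
          have hz : (x - g) (fsucc i) = 0 := by
            simp only [Pi.sub_apply, hgs, h2]; ring
          rw [hz, Pi.single_zero]
          exact Submodule.zero_mem _
        · have hsm : Pi.single j ((x - g) j) = ((x - g) j) • (Pi.single j 1 : Fin m → ℤ) := by
            funext k
            by_cases hk : k = j
            · subst hk; simp
            · simp [Pi.single_eq_of_ne hk]
          rw [hsm]
          exact Submodule.smul_mem _ _
            (Submodule.subset_span (Or.inl ⟨j, ⟨hji, hjs⟩, rfl⟩))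
    have := Submodule.add_mem _ hrest hg
    rwa [sub_add_cancel] at this

def sumlt (m : ℕ) (f : Fin m → ℤ) (n : ℕ) : ℤ :=
  ∑ j ∈ Finset.univ.filter (fun j : Fin m => (j : ℕ) < n), f j

lemma sumlt_zero {m : ℕ} (f : Fin m → ℤ) : sumlt m f 0 = 0 := by
  unfold sumlt
  rw [Finset.filter_false_of_mem (fun j _ => by omega)]
  exact Finset.sum_empty

lemma sumlt_succ {m : ℕ} (f : Fin m → ℤ) {n : ℕ} (h : n < m) :
    sumlt m f (n + 1) = sumlt m f n + f ⟨n, h⟩ := by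
  have hins : Finset.univ.filter (fun j : Fin m => (j : ℕ) < n + 1)
      = insert (⟨n, h⟩ : Fin m) (Finset.univ.filter (fun j : Fin m => (j : ℕ) < n)) := by
    ext j
    simp only [Finset.mem_filter, Finset.mem_univ, true_and, Finset.mem_insert, Fin.ext_iff]
    omega
  rw [sumlt, hins, Finset.sum_insert (by simp), sumlt, add_comm]

lemma sumlt_of_ge {m : ℕ} (f : Fin m → ℤ) {n : ℕ} (h : m ≤ n) : sumlt m f n = ∑ j, f j := by
  unfold sumlt
  rw [Finset.filter_true_of_mem (fun j _ => lt_of_lt_of_le j.isLt h)]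

lemma phi_apply' {m : ℕ} (a b t : Fin m → ℤ) (i : Fin m) :
    phi m a b t i = b i * sumlt m (fun j => a j * t j) i.val
      - a i * sumlt m (fun j => b j * t j) i.val := by
  show ∑ j ∈ Finset.univ.filter (fun j => j < i), (a j * b i - a i * b j) * t j = _
  have hf : Finset.univ.filter (fun j : Fin m => j < i)
      = Finset.univ.filter (fun j : Fin m => (j : ℕ) < i.val) := by
    apply Finset.filter_congr
    intro j _
    exact Iff.rfl
  rw [hf, sumlt, sumlt, Finset.mul_sum, Finset.mul_sum, ← Finset.sum_sub_distrib]
  apply Finset.sum_congr rfl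
  intro j _
  ring

lemma exists_s {A B X Y : ℤ} (h : Int.gcd A B = 1) (heq : A * X + B * Y = 0) :
    ∃ s, X = B * s ∧ Y = -(A * s) := by
  have hAy : A ∣ Y := by
    refine Int.dvd_of_dvd_mul_left_of_gcd_one (⟨-X, by linarith⟩ : A ∣ Y * B) h
  by_cases hA : A = 0
  · subst hA
    have hB1 : B * B = 1 := by
      have hb : Int.natAbs B = 1 := by simpa using h
      rcases Int.natAbs_eq_iff.mp hb with h1 | h1 <;> rw [h1] <;> norm_num
    have hBne : B ≠ 0 := by
      intro h0; rw [h0] at hB1; norm_num at hB1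
    have hY : Y = 0 := by
      have hBY : B * Y = 0 := by linarith
      rcases mul_eq_zero.mp hBY with h0 | h0
      · exact absurd h0 hBne
      · exact h0
    exact ⟨B * X, by rw [← mul_assoc, hB1, one_mul], by rw [hY]; ring⟩
  · obtain ⟨s', hs'⟩ := hAy
    refine ⟨-s', ?_, by rw [hs']; ring⟩
    have h2 : A * X = A * (B * -s') := by
      rw [hs'] at heq
      ring_nf
      ring_nf at heq
      linarith
    exact mul_left_cancel₀ hA h2


/-- `L = L_1 ∩ ⋯ ∩ L_m` has finite index in `ℤ^m`, and for every
`ℤ`-basis `κ_1, …, κ_{m-2}` of `K`, the index `[ℤ^m : L]` equals `|det M|` where `M`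
is the `m × m` matrix with columns `a, b, φ(κ_1), …, φ(κ_{m-2})`; in particular
`det M ≠ 0`. -/
theorem stmt13 (m : ℕ) (hm : 3 ≤ m) (a b : Fin m → ℤ)
    (hprim : ∀ i, Int.gcd (a i) (b i) = 1)
    (hdet : ∀ i : Fin m, a i * b (fsucc i) - a (fsucc i) * b i ≠ 0) :
    (⨅ i, Lmod m a b i).toAddSubgroup.index ≠ 0 ∧
    ∀ (κ : Module.Basis (Fin (m - 2)) ℤ ↥(Kmod m a b)) (M : Matrix (Fin m) (Fin m) ℤ),
      (∀ k : Fin m, M k ⟨0, by omega⟩ = a k) →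
      (∀ k : Fin m, M k ⟨1, by omega⟩ = b k) →
      (∀ (j : Fin (m - 2)) (k : Fin m),
        M k ⟨(j : ℕ) + 2, by have := j.isLt; omega⟩ = phi m a b (κ j : Fin m → ℤ) k) →
      M.det ≠ 0 ∧ (⨅ i, Lmod m a b i).toAddSubgroup.index = M.det.natAbs := by
  classical
  have hm0 : 0 < m := by omega
  have hmlem := fun (i : Fin m) (x : Fin m → ℤ) => mem_Lmod_iff hm a b i x
  set d : Fin m → ℤ := fun i => a i * b (fsucc i) - a (fsucc i) * b i with hd_def
  set D : ℤ := ∏ i, d i with hD_def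
  have hDne : D ≠ 0 := Finset.prod_ne_zero_iff.mpr fun i _ => hdet i
  -- step 1: single j D lies in every Lmod
  have hsingle : ∀ i j : Fin m, (Pi.single j D : Fin m → ℤ) ∈ Lmod m a b i := by
    intro i j
    rw [hmlem i]
    have hDi : D = d i * ∏ k ∈ Finset.univ.erase i, d k :=
      (Finset.mul_prod_erase _ _ (Finset.mem_univ i)).symm
    set c := ∏ k ∈ Finset.univ.erase i, d k with hc
    have hne := fsucc_ne hm i
    by_cases hji : j = i
    · subst hji
      refine ⟨c * b (fsucc j), -(c * a (fsucc j)), ?_, ?_⟩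
      · rw [Pi.single_eq_same, hDi, hd_def]; ring
      · rw [Pi.single_eq_of_ne (Ne.symm hne)]; ring
    · by_cases hjs : j = fsucc i
      · subst hjs
        refine ⟨-(c * b i), c * a i, ?_, ?_⟩
        · rw [Pi.single_eq_of_ne hne]; ring
        · rw [Pi.single_eq_same, hDi, hd_def]; ring
      · refine ⟨0, 0, ?_, ?_⟩
        · rw [Pi.single_eq_of_ne (Ne.symm hji)]; ring
        · rw [Pi.single_eq_of_ne (fun h => hjs h.symm : fsucc i ≠ j)]; ring
  have hN0le : ∀ x : Fin m → ℤ, D • x ∈ ⨅ i, Lmod m a b i := by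
    intro x
    rw [Submodule.mem_iInf]
    intro i
    have hxr : D • x = ∑ j, x j • (Pi.single j D : Fin m → ℤ) := by
      funext k
      simp only [Pi.smul_apply, smul_eq_mul, Finset.sum_apply, Pi.single_apply,
        mul_ite, mul_zero]
      rw [Finset.sum_ite_eq Finset.univ k (fun j => x j * D)]
      simp [mul_comm]
    rw [hxr]
    exact Submodule.sum_mem _ fun j _ => Submodule.smul_mem _ _ (hsingle i j)
  have hidx : (⨅ i, Lmod m a b i).toAddSubgroup.index ≠ 0 := by
    set f : (Fin m → ℤ) →ₗ[ℤ] (Fin m → ℤ) := D • LinearMap.id with hf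
    have hfinj : Function.Injective f := by
      intro x y hxy
      funext k
      have hk := congrFun hxy k
      simp only [hf, LinearMap.smul_apply, LinearMap.id_apply, Pi.smul_apply,
        smul_eq_mul] at hk
      exact mul_left_cancel₀ hDne hk
    have h1 : (LinearMap.range f).toAddSubgroup.index ≠ 0 := by
      rw [Int.submodule_toAddSubgroup_index_ne_zero_iff]
      exact ⟨(LinearEquiv.ofInjective f hfinj).symm⟩
    have h2 : LinearMap.range f ≤ ⨅ i, Lmod m a b i := by
      rintro y ⟨x, rfl⟩
      have : f x = D • x := rfl
      rw [this]
      exact hN0le x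
    exact ne_zero_of_dvd_ne_zero h1 (AddSubgroup.index_dvd_of_le h2)
  refine ⟨hidx, ?_⟩
  intro κ M hM0 hM1 hM2
  have hcol_a : M.transpose ⟨0, by omega⟩ = a := funext fun k => hM0 k
  have hcol_b : M.transpose ⟨1, by omega⟩ = b := funext fun k => hM1 k
  have hcol_phi : ∀ j : Fin (m - 2),
      M.transpose ⟨(j : ℕ) + 2, by have := j.isLt; omega⟩ = phi m a b (κ j : Fin m → ℤ) :=
    fun j => funext fun k => hM2 j k
  have hamem : ∀ i, a ∈ Lmod m a b i :=
    fun i => (hmlem i a).mpr ⟨1, 0, by ring, by ring⟩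
  have hbmem : ∀ i, b ∈ Lmod m a b i :=
    fun i => (hmlem i b).mpr ⟨0, 1, by ring, by ring⟩
  have hphimem : ∀ t : Fin m → ℤ, t ∈ Kmod m a b → ∀ i, phi m a b t ∈ Lmod m a b i := by
    intro t ht i
    obtain ⟨hta, htb⟩ := ht
    have hA0 : ∑ j, a j * t j = 0 := by
      rw [Finset.sum_congr rfl (fun j _ => mul_comm (a j) (t j))]
      exact hta
    have hB0 : ∑ j, b j * t j = 0 := by
      rw [Finset.sum_congr rfl (fun j _ => mul_comm (b j) (t j))]
      exact htb
    rw [hmlem i]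
    have hi1 : i.val < m := i.isLt
    refine ⟨-(sumlt m (fun j => b j * t j) (i.val + 1)),
      sumlt m (fun j => a j * t j) (i.val + 1), ?_, ?_⟩
    · rw [phi_apply', sumlt_succ _ hi1, sumlt_succ _ hi1, Fin.eta]
      ring
    · rcases Nat.lt_or_ge (i.val + 1) m with h1 | h1
      · rw [fsucc_of_lt h1, phi_apply']
        show _ = _
        ring
      · have h2 : i.val + 1 = m := by omega
        rw [fsucc_of_eq h2 hm0, phi_apply']
        show _ = _
        rw [sumlt_zero, sumlt_zero, sumlt_of_ge _ (by omega), sumlt_of_ge _ (by omega),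
          hA0, hB0]
        ring
  have hspan_le : Submodule.span ℤ (Set.range M.transpose) ≤ ⨅ i, Lmod m a b i := by
    rw [Submodule.span_le]
    rintro y ⟨jj, rfl⟩
    rw [SetLike.mem_coe, Submodule.mem_iInf]
    intro i
    by_cases h0 : (jj : ℕ) = 0
    · have hj : jj = ⟨0, by omega⟩ := Fin.ext h0
      rw [hj, hcol_a]; exact hamem i
    · by_cases h1 : (jj : ℕ) = 1
      · have hj : jj = ⟨1, by omega⟩ := Fin.ext h1
        rw [hj, hcol_b]; exact hbmem i
      · have h2 : 2 ≤ (jj : ℕ) := by omega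
        set j' : Fin (m - 2) := ⟨(jj : ℕ) - 2, by have := jj.isLt; omega⟩ with hj'
        have hj : jj = ⟨(j' : ℕ) + 2, by have := j'.isLt; omega⟩ := by
          apply Fin.ext
          simp only [hj']
          omega
        rw [hj, hcol_phi j']
        exact hphimem _ (κ j').2 i
  have hm1lt : m - 1 < m := Nat.sub_lt hm0 Nat.one_pos
  have hle_span : (⨅ i, Lmod m a b i) ≤ Submodule.span ℤ (Set.range M.transpose) := by
    intro x hx
    rw [Submodule.mem_iInf] at hx
    have hUW : ∀ i, ∃ u w : ℤ, x i = u * a i + w * b i ∧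
        x (fsucc i) = u * a (fsucc i) + w * b (fsucc i) := fun i => (hmlem i x).mp (hx i)
    choose u w hu hw using hUW
    set fpred : Fin m → Fin m := fun i => ⟨(i.val + (m - 1)) % m, Nat.mod_lt _ hm0⟩
      with hfpred_def
    have hsp : ∀ i, fsucc (fpred i) = i := by
      intro i
      apply Fin.ext
      show ((i.val + (m - 1)) % m + 1) % m = i.val
      rw [Nat.mod_add_mod]
      have he : i.val + (m - 1) + 1 = i.val + m := by omega
      rw [he, Nat.add_mod_right, Nat.mod_eq_of_lt i.isLt]
    have hfpred_zero : ∀ h0 : (0 : ℕ) < m, fpred ⟨0, h0⟩ = ⟨m - 1, hm1lt⟩ := by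
      intro h0
      apply Fin.ext
      show (0 + (m - 1)) % m = m - 1
      rw [Nat.zero_add, Nat.mod_eq_of_lt hm1lt]
    have hfpred_succ : ∀ n (hn1 : n + 1 < m),
        fpred ⟨n + 1, hn1⟩ = ⟨n, Nat.lt_of_succ_lt hn1⟩ := by
      intro n hn1
      apply Fin.ext
      show (n + 1 + (m - 1)) % m = n
      have he : n + 1 + (m - 1) = n + m := by omega
      rw [he, Nat.add_mod_right, Nat.mod_eq_of_lt (Nat.lt_of_succ_lt hn1)]
    have heq2 : ∀ i, x i = u (fpred i) * a i + w (fpred i) * b i := by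
      intro i
      have h := hw (fpred i)
      rwa [hsp i] at h
    have hstep : ∀ i, ∃ s, u (fpred i) - u i = b i * s ∧ w (fpred i) - w i = -(a i * s) := by
      intro i
      apply exists_s (hprim i)
      have h1 := hu i
      have h2 := heq2 i
      ring_nf
      ring_nf at h1 h2
      linarith
    choose t ht1 ht2 using hstep
    have key : ∀ n (hn : n < m),
        u ⟨n, hn⟩ + sumlt m (fun j => b j * t j) (n + 1) = u ⟨m - 1, hm1lt⟩ ∧
        w ⟨n, hn⟩ - sumlt m (fun j => a j * t j) (n + 1) = w ⟨m - 1, hm1lt⟩ := by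
      intro n
      induction n with
      | zero =>
        intro hn
        have h1 := ht1 ⟨0, hn⟩
        have h2 := ht2 ⟨0, hn⟩
        rw [hfpred_zero hn] at h1 h2
        rw [sumlt_succ (fun j => b j * t j) hn, sumlt_succ (fun j => a j * t j) hn,
          sumlt_zero (fun j => b j * t j), sumlt_zero (fun j => a j * t j)]
        constructor
        · linarith
        · linarith
      | succ k ih =>
        intro hn
        obtain ⟨ih1, ih2⟩ := ih (Nat.lt_of_succ_lt hn)
        have h1 := ht1 ⟨k + 1, hn⟩
        have h2 := ht2 ⟨k + 1, hn⟩
        rw [hfpred_succ k hn] at h1 h2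
        rw [sumlt_succ (fun j => b j * t j) hn, sumlt_succ (fun j => a j * t j) hn]
        constructor
        · linarith
        · linarith
    have htK : t ∈ Kmod m a b := by
      obtain ⟨k1, k2⟩ := key (m - 1) hm1lt
      have hmm : m ≤ m - 1 + 1 := by omega
      rw [sumlt_of_ge _ hmm] at k1 k2
      have hB0 : ∑ j, b j * t j = 0 := by linarith
      have hA0 : ∑ j, a j * t j = 0 := by linarith
      constructor
      · rw [Finset.sum_congr rfl (fun j _ => mul_comm (t j) (a j))]
        exact hA0
      · rw [Finset.sum_congr rfl (fun j _ => mul_comm (t j) (b j))]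
        exact hB0
    have hxeq : x = u ⟨m - 1, hm1lt⟩ • a + w ⟨m - 1, hm1lt⟩ • b + phi m a b t := by
      funext i
      obtain ⟨iv, hiv⟩ := i
      simp only [Pi.add_apply, Pi.smul_apply, smul_eq_mul]
      cases iv with
      | zero =>
        have h := heq2 ⟨0, hiv⟩
        rw [hfpred_zero hiv] at h
        rw [phi_apply']
        show _ = _
        rw [sumlt_zero, sumlt_zero]
        rw [h]
        ring
      | succ k =>
        have h := heq2 ⟨k + 1, hiv⟩
        rw [hfpred_succ k hiv] at h
        obtain ⟨k1, k2⟩ := key k (Nat.lt_of_succ_lt hiv)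
        have hu' : u ⟨k, Nat.lt_of_succ_lt hiv⟩
            = u ⟨m - 1, hm1lt⟩ - sumlt m (fun j => b j * t j) (k + 1) := by linarith
        have hw' : w ⟨k, Nat.lt_of_succ_lt hiv⟩
            = w ⟨m - 1, hm1lt⟩ + sumlt m (fun j => a j * t j) (k + 1) := by linarith
        rw [phi_apply']
        show _ = _
        rw [h, hu', hw']
        ring
    rw [hxeq]
    refine Submodule.add_mem _ (Submodule.add_mem _ ?_ ?_) ?_
    · exact Submodule.smul_mem _ _ (Submodule.subset_span ⟨⟨0, by omega⟩, hcol_a⟩)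
    · exact Submodule.smul_mem _ _ (Submodule.subset_span ⟨⟨1, by omega⟩, hcol_b⟩)
    · set τ : ↥(Kmod m a b) := ⟨t, htK⟩ with hτ
      have hrepr := congrArg (fun z : ↥(Kmod m a b) => (z : Fin m → ℤ)) (κ.sum_repr τ)
      simp only [AddSubmonoidClass.coe_finset_sum, SetLike.val_smul] at hrepr
      have ht_eq : t = ∑ j, κ.repr τ j • ((κ j : Fin m → ℤ)) := hrepr.symm
      rw [ht_eq, map_sum]
      refine Submodule.sum_mem _ fun j _ => ?_
      rw [map_smul]
      exact Submodule.smul_mem _ _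
        (Submodule.subset_span ⟨⟨(j : ℕ) + 2, by have := j.isLt; omega⟩, hcol_phi j⟩)
  have hspan : Submodule.span ℤ (Set.range M.transpose) = ⨅ i, Lmod m a b i :=
    le_antisymm hspan_le hle_span
  -- injectivity of mulVecLin
  have hrange : LinearMap.range M.mulVecLin = ⨅ i, Lmod m a b i := by
    rw [Matrix.range_mulVecLin]; exact hspan
  obtain ⟨e⟩ := Int.submodule_toAddSubgroup_index_ne_zero_iff.mp hidx
  have hmem_range : ∀ x : Fin m → ℤ, M.mulVecLin x ∈ (⨅ i, Lmod m a b i) := by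
    intro x
    rw [← hrange]
    exact LinearMap.mem_range_self _ x
  set g1 : (Fin m → ℤ) →ₗ[ℤ] ↥(⨅ i, Lmod m a b i) :=
    M.mulVecLin.codRestrict _ hmem_range with hg1def
  set g : (Fin m → ℤ) →ₗ[ℤ] (Fin m → ℤ) := (e : _ →ₗ[ℤ] _) ∘ₗ g1 with hgdef
  have hg1surj : Function.Surjective g1 := by
    rintro ⟨y, hy⟩
    rw [← hrange] at hy
    obtain ⟨z, hz⟩ := hy
    exact ⟨z, Subtype.ext hz⟩
  have hgsurj : Function.Surjective g := by
    rw [hgdef, LinearMap.coe_comp]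
    exact e.surjective.comp hg1surj
  have hginj : Function.Injective g :=
    OrzechProperty.injective_of_surjective_endomorphism g hgsurj
  have hg1inj : Function.Injective g1 := by
    intro x y hxy
    apply hginj
    rw [hgdef]
    simp only [LinearMap.comp_apply, hxy]
  have hMinj : Function.Injective M.mulVecLin := by
    intro x y hxy
    apply hg1inj
    apply Subtype.ext
    simpa [hg1def] using hxy
  have hli : LinearIndependent ℤ M.transpose := by
    refine Fintype.linearIndependent_iff.mpr ?_
    intro c hc i
    have h0 : M.mulVecLin c = 0 := by
      funext k
      have hck := congrFun hc k
      simp only [Finset.sum_apply, Pi.smul_apply, smul_eq_mul, Pi.zero_apply,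
        Matrix.transpose_apply] at hck
      simp only [Matrix.mulVecLin_apply, Matrix.mulVec, dotProduct, Pi.zero_apply]
      rw [Finset.sum_congr rfl (fun j _ => mul_comm (M k j) (c j))]
      exact hck
    have hc0 : c = 0 := hMinj (by rw [h0, map_zero])
    rw [hc0]
    rfl
  set bspan : Module.Basis (Fin m) ℤ ↥(Submodule.span ℤ (Set.range M.transpose)) := Module.Basis.span hli
    with hbspan
  set bN : Module.Basis (Fin m) ℤ ↥(⨅ i, Lmod m a b i) :=
    bspan.map (LinearEquiv.ofEq _ _ hspan) with hbN
  have hcoe : (fun j => ((bN j : Fin m → ℤ))) = M.transpose := by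
    funext j
    rw [hbN, Module.Basis.map_apply]
    have h1 : ((LinearEquiv.ofEq _ _ hspan) (bspan j) : Fin m → ℤ) = (bspan j : Fin m → ℤ) := rfl
    rw [h1, hbspan]; exact congrArg Subtype.val (Module.Basis.span_apply hli j)
  have hfinal : (⨅ i, Lmod m a b i).toAddSubgroup.index = M.det.natAbs := by
    rw [index_eq_natAbs_det _ bN, hcoe]
    congr 1
  constructor
  · intro h0
    rw [hfinal, h0, Int.natAbs_zero] at hidx
    exact hidx rfl
  · exact hfinal

end ToricStmt
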